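/- Let n ≥ 2 and 1 ≤ p ≤ n-1 be integers, and let r ≥ 1, s ≥ 0, 0 ≤ k ≤ s be integers. Then (nr-p) · C(s + p/n, s-k) · C(k + p/n, r+k) = (-1)^{r-1} · p · C(s + p/n, s) · C(r - p/n, r) · C(r+s, s-k) / C(r+s, s), where C(r+s, s) ≠ 0 is an ordinary binomial coefficient. -/

import Mathlib

/-- The generalized binomial coefficient C(x, k) = x(x-1)⋯(x-k+1)/k! for x ∈ ℚ. -/
def gchoose (x : ℚ) (k : ℕ) : ℚ :=
  (∏ i ∈ Finset.range k, (x - i)) / (Nat.factorial k)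

/-- Identity from the proof of Proposition 5.1 of the paper. -/
theorem gchoose_prop51_identity (n p r s k : ℕ) (hn : 2 ≤ n) (hp1 : 1 ≤ p) (hpn : p ≤ n - 1)
    (hr : 1 ≤ r) (hk : k ≤ s) :
    ((n : ℚ) * r - p) * gchoose ((s : ℚ) + (p : ℚ) / (n : ℚ)) (s - k)
        * gchoose ((k : ℚ) + (p : ℚ) / (n : ℚ)) (r + k)
      = (-1 : ℚ) ^ (r - 1) * p * gchoose ((s : ℚ) + (p : ℚ) / (n : ℚ)) s
          * gchoose ((r : ℚ) - (p : ℚ) / (n : ℚ)) r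
          * ((r + s).choose (s - k) : ℚ) / ((r + s).choose s : ℚ) := by
  obtain ⟨m, rfl⟩ : ∃ m, r = m + 1 := ⟨r - 1, by omega⟩
  have hn0 : (n:ℚ) ≠ 0 := Nat.cast_ne_zero.mpr (by omega)
  set x : ℚ := (p:ℚ)/(n:ℚ) with hx
  -- Lemma A
  have hA : ((m:ℚ)+1-x) * ∏ i ∈ Finset.range (m+1), (x - (i:ℕ))
      = (-1:ℚ)^m * x * ∏ i ∈ Finset.range (m+1), (((m:ℚ)+1-x) - (i:ℕ)) := by
    have h1 : ∏ i ∈ Finset.range (m+1), (x - (i:ℕ))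
        = (∏ i ∈ Finset.range m, (x - ((i:ℚ)+1))) * x := by
      have := Finset.prod_range_succ' (fun i => x - (i:ℕ)) m
      simpa [add_comm] using this
    have h2 : ∏ i ∈ Finset.range (m+1), (((m:ℚ)+1-x) - (i:ℕ))
        = ∏ i ∈ Finset.range (m+1), ((i:ℚ)+1-x) := by
      rw [← Finset.prod_range_reflect (fun i => (i:ℚ)+1-x) (m+1)]
      apply Finset.prod_congr rfl
      intro i hi
      simp only [Finset.mem_range] at hi
      have : ((m + 1 - 1 - i : ℕ) : ℚ) = (m:ℚ) - i := by
        have : m + 1 - 1 - i = m - i := by omega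
        rw [this, Nat.cast_sub (by omega)]
      rw [this]; ring
    have h3 : ∏ i ∈ Finset.range (m+1), ((i:ℚ)+1-x)
        = (∏ i ∈ Finset.range m, ((i:ℚ)+1-x)) * ((m:ℚ)+1-x) := by
      rw [Finset.prod_range_succ]
    have h4 : ∏ i ∈ Finset.range m, (x - ((i:ℚ)+1))
        = (-1:ℚ)^m * ∏ i ∈ Finset.range m, ((i:ℚ)+1-x) := by
      rw [show ((-1:ℚ)^m) = ∏ _i ∈ Finset.range m, (-1:ℚ) by simp]
      rw [← Finset.prod_mul_distrib]
      apply Finset.prod_congr rfl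
      intro i _; ring
    rw [h1, h2, h3, h4]; ring
  -- Lemma B
  have hB : ∏ i ∈ Finset.range (m+1+k), (((k:ℚ)+x) - (i:ℕ))
      = (∏ i ∈ Finset.range k, (((k:ℚ)+x) - (i:ℕ))) * ∏ i ∈ Finset.range (m+1), (x - (i:ℕ)) := by
    rw [show m+1+k = k+(m+1) by omega, Finset.prod_range_add]
    congr 1
    apply Finset.prod_congr rfl
    intro i _
    push_cast; ring
  -- Lemma C
  have hC : ∏ i ∈ Finset.range s, (((s:ℚ)+x) - (i:ℕ))
      = (∏ i ∈ Finset.range (s-k), (((s:ℚ)+x) - (i:ℕ)))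
        * ∏ i ∈ Finset.range k, (((k:ℚ)+x) - (i:ℕ)) := by
    rw [show s = (s-k)+k by omega, Finset.prod_range_add]
    rw [show (s-k)+k = s by omega]
    congr 1
    apply Finset.prod_congr rfl
    intro i _
    have : (((s - k : ℕ) : ℚ)) = (s:ℚ) - k := by rw [Nat.cast_sub hk]
    push_cast [this]; ring
  unfold gchoose
  rw [Nat.cast_choose ℚ (show s - k ≤ m+1+s by omega),
      Nat.cast_choose ℚ (show s ≤ m+1+s by omega),
      show (m+1+s) - (s-k) = m+1+k by omega,
      show (m+1+s) - s = m+1 by omega]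
  have hxr : ((m+1:ℕ):ℚ) - x = (m:ℚ)+1-x := by push_cast; ring
  push_cast
  rw [hB, hC]
  have hfac : ∀ j : ℕ, ((j.factorial : ℚ)) ≠ 0 := fun j => Nat.cast_ne_zero.mpr j.factorial_ne_zero
  have hp : (p:ℚ) = (n:ℚ) * x := by rw [hx]; field_simp
  rw [show ((n:ℚ) * (↑m + 1) - ↑p) = (n:ℚ) * ((↑m+1) - x) by rw [hx]; field_simp]
  rw [show ((-1:ℚ)^m * ↑p) = (-1:ℚ)^m * ((n:ℚ) * x) by rw [hp]]
  clear_value x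
  clear hx hp
  field_simp
  linear_combination ((∏ i ∈ Finset.range (s - k), ((s:ℚ) + x - (i:ℕ)))
    * (∏ i ∈ Finset.range k, ((k:ℚ) + x - (i:ℕ)))) * hA
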